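/- For a finite joint distribution p where the marginal p_A is uniform on A, V_2(A;B) ≤ √(|A|/2) · Σ_{a,b} |p(a,b) − p(a)p(b)|. -/

import Mathlib

open Finset

lemma key_zero_sum {A : Type*} [Fintype A] (x : A → ℝ) (h : ∑ a, x a = 0) :
    ∑ a, (x a) ^ 2 ≤ (1 / 2) * (∑ a, |x a|) ^ 2 := by
  set P := ∑ a, max (x a) 0 with hP
  set N := ∑ a, max (-x a) 0 with hN
  have hPN : P = N := by
    have h1 : P - N = ∑ a, x a := by
      rw [hP, hN, ← Finset.sum_sub_distrib]
      exact Finset.sum_congr rfl fun a _ => max_zero_sub_eq_self (x a)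
    rw [h] at h1
    linarith
  have habs : ∑ a, |x a| = P + N := by
    rw [hP, hN, ← Finset.sum_add_distrib]
    refine Finset.sum_congr rfl fun a _ => ?_
    rcases le_total 0 (x a) with hx | hx
    · rw [abs_of_nonneg hx, max_eq_left hx, max_eq_right (by linarith)]; ring
    · rw [abs_of_nonpos hx, max_eq_right hx, max_eq_left (by linarith)]; ring
  have hbound : ∀ a, |x a| ≤ (∑ a, |x a|) / 2 := by
    intro a
    have h1 : x a ≤ P := by
      calc x a ≤ max (x a) 0 := le_max_left _ _
        _ ≤ P := by
            rw [hP]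
            exact Finset.single_le_sum (f := fun i => max (x i) 0)
              (fun i _ => le_max_right _ _) (mem_univ a)
    have h2 : -x a ≤ N := by
      calc -x a ≤ max (-x a) 0 := le_max_left _ _
        _ ≤ N := by
            rw [hN]
            exact Finset.single_le_sum (f := fun i => max (-x i) 0)
              (fun i _ => le_max_right _ _) (mem_univ a)
    rw [abs_le]
    constructor <;> [skip; skip] <;> rw [habs] <;> linarith [hPN]
  calc ∑ a, (x a) ^ 2 = ∑ a, |x a| * |x a| := by
        refine Finset.sum_congr rfl fun a _ => ?_
        rw [abs_mul_abs_self, sq]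
    _ ≤ ∑ a, ((∑ a, |x a|) / 2) * |x a| :=
        Finset.sum_le_sum fun a _ =>
          mul_le_mul_of_nonneg_right (hbound a) (abs_nonneg _)
    _ = (1 / 2) * (∑ a, |x a|) ^ 2 := by rw [← Finset.mul_sum]; ring

/-- If the marginal `p_A` is uniform then
`V_2(A;B) ≤ √(|A|/2) · Σ_{a,b} |p(a,b) − p(a)p(b)|`. -/
theorem stmt_5 {A B : Type*} [Fintype A] [Fintype B]
    (p : A → B → ℝ) (hp : ∀ a b, 0 ≤ p a b)
    (hsum : ∑ a, ∑ b, p a b = 1)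
    (huni : ∀ a, ∑ b, p a b = (Fintype.card A : ℝ)⁻¹) :
    (∑ b, (∑ a, (∑ b', p a b') *
        (p a b / (∑ b', p a b') - ∑ a', p a' b) ^ 2) ^ ((1:ℝ)/2)) ≤
      Real.sqrt ((Fintype.card A : ℝ) / 2) *
        ∑ a, ∑ b, |p a b - (∑ b', p a b') * (∑ a', p a' b)| := by
  set c : ℝ := (Fintype.card A : ℝ) with hc
  have hc0 : 0 < c := by
    rcases Nat.eq_zero_or_pos (Fintype.card A) with h | h
    · exfalso
      have : IsEmpty A := Fintype.card_eq_zero_iff.mp h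
      rw [Finset.sum_of_isEmpty] at hsum
      norm_num at hsum
    · rw [hc]; exact_mod_cast h
  have hcne : c ≠ 0 := ne_of_gt hc0
  set q : B → ℝ := fun b => ∑ a', p a' b with hq
  set x : B → A → ℝ := fun b a => p a b - c⁻¹ * q b with hx
  have hxsum : ∀ b, ∑ a, x b a = 0 := by
    intro b
    simp only [hx, Finset.sum_sub_distrib, Finset.sum_const, card_univ,
      nsmul_eq_mul]
    rw [hq]
    field_simp
    simp [hc]
  -- rewrite inner sum
  have hinner : ∀ b, (∑ a, (∑ b', p a b') *
      (p a b / (∑ b', p a b') - ∑ a', p a' b) ^ 2) = c * ∑ a, (x b a) ^ 2 := by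
    intro b
    rw [Finset.mul_sum]
    refine Finset.sum_congr rfl fun a _ => ?_
    rw [huni a, hx]
    simp only
    rw [hq]
    field_simp
  have hterm : ∀ b, (∑ a, (∑ b', p a b') *
      (p a b / (∑ b', p a b') - ∑ a', p a' b) ^ 2) ^ ((1:ℝ)/2) ≤
      Real.sqrt (c / 2) * ∑ a, |x b a| := by
    intro b
    rw [hinner b, ← Real.sqrt_eq_rpow]
    have hS : 0 ≤ ∑ a, |x b a| := Finset.sum_nonneg fun a _ => abs_nonneg _
    calc Real.sqrt (c * ∑ a, (x b a) ^ 2)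
        ≤ Real.sqrt (c * ((1/2) * (∑ a, |x b a|) ^ 2)) := by
          apply Real.sqrt_le_sqrt
          exact mul_le_mul_of_nonneg_left (key_zero_sum (x b) (hxsum b)) hc0.le
      _ = Real.sqrt (c / 2) * ∑ a, |x b a| := by
          rw [show c * ((1/2) * (∑ a, |x b a|) ^ 2) = (c/2) * (∑ a, |x b a|) ^ 2
            by ring, Real.sqrt_mul (by positivity), Real.sqrt_sq hS]
  calc (∑ b, (∑ a, (∑ b', p a b') *
        (p a b / (∑ b', p a b') - ∑ a', p a' b) ^ 2) ^ ((1:ℝ)/2))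
      ≤ ∑ b, Real.sqrt (c / 2) * ∑ a, |x b a| :=
        Finset.sum_le_sum fun b _ => hterm b
    _ = Real.sqrt (c / 2) * ∑ a, ∑ b, |p a b - (∑ b', p a b') * (∑ a', p a' b)| := by
        rw [← Finset.mul_sum, Finset.sum_comm (s := univ) (t := univ)]
        congr 1
        refine Finset.sum_congr rfl fun a _ => Finset.sum_congr rfl fun b _ => ?_
        rw [hx, huni a, hq]
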